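/- With w = 2cpq/(pq+2c(mp+nq)) + 2c and v_a = −2cpq/(a(pq+2c(mp+nq))) + 1, the Miura relation (p−q+ŵ−w̃)·v̂̃_a = (p−a)v̂_a − (q−a)ṽ_a holds at all lattice points where denominators are nonzero. -/

import Mathlib

/-- Miura relation `(p−q+ŵ−w̃)·v̂̃_a = (p−a)v̂_a − (q−a)ṽ_a` between the N=2
rational lpKdV and lpmKdV solutions. -/
theorem stmt_5 (p q c a : ℝ) (hp : p ≠ 0) (hq : q ≠ 0) (hc : c ≠ 0) (ha : a ≠ 0)
    (w v : ℤ → ℤ → ℝ)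
    (hw : ∀ n m : ℤ, w n m = 2*c*p*q / (p*q + 2*c*((m : ℝ)*p + (n : ℝ)*q)) + 2*c)
    (hv : ∀ n m : ℤ, v n m = -(2*c*p*q) / (a * (p*q + 2*c*((m : ℝ)*p + (n : ℝ)*q))) + 1)
    (n m : ℤ)
    (h1 : p*q + 2*c*((m : ℝ)*p + (n : ℝ)*q) ≠ 0)
    (h2 : p*q + 2*c*((m : ℝ)*p + ((n : ℝ)+1)*q) ≠ 0)
    (h3 : p*q + 2*c*(((m : ℝ)+1)*p + (n : ℝ)*q) ≠ 0)
    (h4 : p*q + 2*c*(((m : ℝ)+1)*p + ((n : ℝ)+1)*q) ≠ 0) :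
    (p - q + w n (m+1) - w (n+1) m) * v (n+1) (m+1)
      = (p - a) * v n (m+1) - (q - a) * v (n+1) m := by
  simp only [hw, hv, Int.cast_add, Int.cast_one]
  have e4 : p*q + 2*c*(((m : ℝ)+1)*p + ((n : ℝ)+1)*q) = (p*q + 2*c*(((m : ℝ)+1)*p + (n : ℝ)*q)) + 2*c*q := by ring
  have e2 : p*q + 2*c*((m : ℝ)*p + ((n : ℝ)+1)*q) = (p*q + 2*c*(((m : ℝ)+1)*p + (n : ℝ)*q)) + 2*c*q - 2*c*p := by ring
  rw [e4] at h4 ⊢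
  rw [e2] at h2 ⊢
  generalize p*q + 2*c*(((m : ℝ)+1)*p + (n : ℝ)*q) = D at *
  simp only [div_eq_mul_inv, mul_inv]
  have i2 := mul_inv_cancel₀ h2
  have i3 := mul_inv_cancel₀ h3
  have i4 := mul_inv_cancel₀ h4
  have ia := mul_inv_cancel₀ ha
  generalize (D + 2 * c * q - 2 * c * p)⁻¹ = x at *
  generalize D⁻¹ = y at *
  generalize (D + 2 * c * q)⁻¹ = z at *
  generalize a⁻¹ = b at *
  linear_combination (2*p*q*c*b*(-q*z)) * i2 + (2*p*q*c*b*(p*z)) * i3 + (2*p*q*c*b*(q*x - p*y)) * i4 + (-2*p*q*c*(y-x)) * ia
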